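/- With the same setup, for any symbol a ∈ [1..n] and any j ≥ 2, the position of the j-th occurrence of a in S equals select₀(Z, select_a(S', j−1)), i.e., select_a(S, j) = select₀(Z, select_a(S', j−1)). -/

import Mathlib

section
variable {n : ℕ}

/-- `q` is the first (leftmost) occurrence in `S` of the symbol `S[q]`
(0-based positions; `d` is a dummy default value). -/
def isFirst (S : List (Fin n)) (d : Fin n) (q : ℕ) : Prop := S.getD q d ∉ S.take q

instance (S : List (Fin n)) (d : Fin n) (q : ℕ) : Decidable (isFirst S d q) := by
  unfold isFirst; infer_instance

/-- `S'`: the subsequence of `S` at unmarked (non-first-occurrence) positions. -/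
def subseq (S : List (Fin n)) (d : Fin n) : List (Fin n) :=
  ((List.range S.length).filter (fun q => decide (¬ isFirst S d q))).map
    (fun q => S.getD q d)

/-- `select_a(S,j)`: the 1-based position of the `j`-th occurrence of symbol `a`
in `S` (`j` is 1-based; out-of-range defaults to `|S| + 1`). -/
def selSym (S : List (Fin n)) (d a : Fin n) (j : ℕ) : ℕ :=
  ((List.range S.length).filter (fun q => decide (S.getD q d = a))).getD
    (j - 1) S.length + 1

/-- `select₀(Z,k)`: the 1-based position of the `k`-th zero of the first-occurrence
bitvector `Z` of `S`, i.e. of the `k`-th unmarked position. -/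
def sel0 (S : List (Fin n)) (d : Fin n) (k : ℕ) : ℕ :=
  ((List.range S.length).filter (fun q => decide (¬ isFirst S d q))).getD
    (k - 1) S.length + 1

end

/-- With `S` a sequence over `[1..n]` in which every symbol occurs,
`Z` marking first occurrences and `S'` the subsequence of unmarked positions, for
any symbol `a` and any `j ≥ 2` (with `j` at most the number of occurrences of `a`),
the position of the `j`-th occurrence of `a` in `S` equals
`select₀(Z, select_a(S', j − 1))`:
`select_a(S, j) = select₀(Z, select_a(S', j − 1))`. -/
lemma compr {α} (U : List α) (d : α) (p : α → Bool) :
    ((List.range U.length).filter (fun i => p (U.getD i d))).map (fun i => U.getD i d)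
      = U.filter p := by
  induction U with
  | nil => rfl
  | cons b t ih =>
    rw [List.length_cons, List.range_succ_eq_map, List.filter_cons]
    simp only [List.getD_cons_zero, List.filter_map, Function.comp, List.getD_cons_succ]
    cases hp : p b <;>
      simp [hp, List.filter_cons, List.map_map, Function.comp_def, List.getD_cons_succ,
        List.getElem?_cons_succ, List.getD] <;> simpa [List.getD_eq_getElem?_getD] using ih

lemma factA {n : ℕ} (S : List (Fin n)) (d a : Fin n) (ha : a ∈ S) :
    ((List.range S.length).filter (fun q => decide (S.getD q d = a))).filter
        (fun q => decide (¬ isFirst S d q))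
      = ((List.range S.length).filter (fun q => decide (S.getD q d = a))).tail := by
  set Pa := (List.range S.length).filter (fun q => decide (S.getD q d = a)) with hPadef
  have hmem : ∀ q : ℕ, q ∈ Pa ↔ q < S.length ∧ S.getD q d = a := by
    intro q; simp [hPadef, List.mem_filter, List.mem_range]
  have hsorted : List.Pairwise (· < ·) Pa := (List.pairwise_lt_range (n := S.length)).filter _
  have hne : Pa ≠ [] := by
    obtain ⟨i, hi, hiS⟩ := List.mem_iff_getElem.mp ha
    intro h
    have : i ∈ Pa := (hmem i).mpr ⟨hi, by rw [List.getD_eq_getElem _ _ hi]; exact hiS⟩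
    simp [h] at this
  obtain ⟨h, t, hPa⟩ := List.exists_cons_of_ne_nil hne
  have hht : ∀ q ∈ t, h < q := by
    intro q hq
    have := hsorted
    rw [hPa, List.pairwise_cons] at this
    exact this.1 q hq
  have hhmem : h ∈ Pa := by rw [hPa]; exact List.mem_cons_self
  have hmin : ∀ q ∈ Pa, h ≤ q := by
    intro q hq
    rw [hPa, List.mem_cons] at hq
    rcases hq with rfl | hq
    · exact le_refl _
    · exact (hht q hq).le
  have hha := (hmem h).mp hhmem
  have hfirst : isFirst S d h := by
    rw [isFirst, hha.2]
    intro hcontra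
    obtain ⟨i, hi, hiS⟩ := List.mem_iff_getElem.mp hcontra
    have hilen : i < S.length := lt_of_lt_of_le hi (by simp [List.length_take])
    have hih : i < h := lt_of_lt_of_le hi (by simp [List.length_take])
    rw [List.getElem_take] at hiS
    have : i ∈ Pa := (hmem i).mpr ⟨hilen, by rw [List.getD_eq_getElem _ _ hilen]; exact hiS⟩
    exact absurd (hmin i this) (by omega)
  have hnotfirst : ∀ q ∈ t, ¬ isFirst S d q := by
    intro q hq
    have hqPa : q ∈ Pa := by rw [hPa]; exact List.mem_cons_of_mem _ hq
    have hq' := (hmem q).mp hqPa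
    have hhq := hht q hq
    rw [isFirst, hq'.2, not_not]
    have hh2 : h < (S.take q).length := by
      rw [List.length_take]; omega
    have : (S.take q)[h] = a := by
      rw [List.getElem_take, ← List.getD_eq_getElem S d hha.1]; exact hha.2
    exact this ▸ List.getElem_mem hh2
  rw [hPa, List.filter_cons]
  have h1 : decide (¬ isFirst S d h) = false := by simp [hfirst]
  rw [h1]
  simp only [List.tail_cons, if_false, cond_false]
  exact List.filter_eq_self.mpr fun q hq => by simpa using hnotfirst q hq

lemma getElem_idx_congr {α} (l : List α) {i j : ℕ} (h : i = j) {hi : i < l.length} :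
    l[i] = l[j]'(h ▸ hi) := by subst h; rfl

theorem stmt_10 {n : ℕ} (hn : 0 < n) (S : List (Fin n))
    (hall : ∀ a : Fin n, a ∈ S) (d : Fin n) (a : Fin n) (j : ℕ)
    (hj2 : 2 ≤ j) (hj : j ≤ S.count a) :
    selSym S d a j = sel0 S d (selSym (subseq S d) d a (j - 1)) := by
  classical
  simp only [selSym, sel0]
  set Pa := (List.range S.length).filter (fun q => decide (S.getD q d = a)) with hPadef
  set U := (List.range S.length).filter (fun q => decide (¬ isFirst S d q)) with hUdef
  have hS' : subseq S d = U.map (fun q => S.getD q d) := rfl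
  have hUlen : (subseq S d).length = U.length := by rw [hS', List.length_map]
  have hcount : Pa.length = S.count a := by
    have h1 := congrArg List.length (compr S d (fun x => decide (x = a)))
    rw [List.length_map] at h1
    rw [hPadef, h1, List.count_eq_countP, List.countP_eq_length_filter]
    exact congrArg List.length (List.filter_congr fun x _ => (Bool.beq_eq_decide_eq x a).symm)
  have hW : U.filter (fun q => decide (S.getD q d = a)) = Pa.tail := by
    rw [hUdef, hPadef, List.filter_filter, ← factA S d a (hall a), List.filter_filter]
    exact List.filter_congr fun x _ => by rw [Bool.and_comm]
  set W := Pa.tail with hWdef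
  have hWlen : W.length = S.count a - 1 := by rw [hWdef, List.length_tail, hcount]
  set Qa := (List.range (subseq S d).length).filter
      (fun q => decide ((subseq S d).getD q d = a)) with hQadef
  have hQa : Qa = (List.range U.length).filter
      (fun i => decide (S.getD (U.getD i 0) d = a)) := by
    rw [hQadef, hUlen]
    apply List.filter_congr
    intro i hi
    rw [List.mem_range] at hi
    have : (subseq S d).getD i d = S.getD (U.getD i 0) d := by
      rw [hS', List.getD_eq_getElem _ _ (by simpa using hi), List.getElem_map,
        List.getD_eq_getElem _ _ hi]
    rw [this]
  have hmapW : Qa.map (fun i => U.getD i 0) = W := by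
    rw [hQa]
    exact (compr U 0 (fun q => decide (S.getD q d = a))).trans hW
  have hQlen : Qa.length = W.length := by
    rw [← hmapW, List.length_map]
  have hj1 : j - 1 < Pa.length := by omega
  have hj22 : j - 1 - 1 < Qa.length := by rw [hQlen, hWlen]; omega
  set i0 := Qa.getD (j - 1 - 1) (subseq S d).length with hi0
  have hi0eq : i0 = Qa[j - 1 - 1] := List.getD_eq_getElem _ _ hj22
  have hkU : Qa[j - 1 - 1] < U.length := by
    have hsub : ∀ x ∈ Qa, x < U.length := by
      intro x hx
      rw [hQa, List.mem_filter] at hx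
      exact List.mem_range.mp hx.1
    exact hsub _ (List.getElem_mem hj22)
  have hkey : U.getD i0 S.length = Pa.getD (j - 1) S.length := by
    rw [hi0eq, List.getD_eq_getElem _ _ hkU, List.getD_eq_getElem _ _ hj1]
    have h2 : (Qa.map (fun i => U.getD i 0))[j - 1 - 1]'(by
        rw [List.length_map]; exact hj22) = U.getD (Qa[j - 1 - 1]) 0 :=
      List.getElem_map _
    have h3 := List.getElem_of_eq hmapW (by rw [List.length_map]; exact hj22)
    have h4 : W[j - 1 - 1]'(hQlen ▸ hj22) = Pa[j - 1] := by
      have h5 := List.getElem_tail (l := Pa) (i := j - 1 - 1)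
        (h := by simpa [hWdef] using (hQlen ▸ hj22 : j - 1 - 1 < W.length))
      have h6 : j - 1 - 1 + 1 = j - 1 := by omega
      rw [getElem_idx_congr Pa h6] at h5
      exact h5
    rw [← h4, ← h3, h2, List.getD_eq_getElem _ _ hkU]
  rw [Nat.add_sub_cancel, hkey]
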